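/- For every set D ⊆ ℝ², the set {x ∈ ℝ² : closedBall(x, ‖x‖) ⊆ D} of centers x whose closed ball through the origin of radius ‖x‖ is contained in D, is a convex subset of ℝ². -/

import Mathlib

open Metric Real Set MeasureTheory
open scoped RealInnerProductSpace

noncomputable section

/-- The Euclidean plane. -/
abbrev E2 := EuclideanSpace ℝ (Fin 2)

/-- The unit vector `u_θ = (cos θ, sin θ)`. -/
def uvec (θ : ℝ) : E2 := (WithLp.equiv 2 (Fin 2 → ℝ)).symm ![Real.cos θ, Real.sin θ]

/-- The vector `v_θ = (−sin θ, cos θ)`. -/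
def vvec (θ : ℝ) : E2 := (WithLp.equiv 2 (Fin 2 → ℝ)).symm ![-Real.sin θ, Real.cos θ]

/-- The Voronoi flower of `L` with respect to `x`: the union over `s ∈ L` of the closed
balls admitting the segment `[x, s]` as a diameter. -/
def vflower (x : E2) (L : Set E2) : Set E2 :=
  ⋃ s ∈ L, closedBall ((2:ℝ)⁻¹ • (x + s)) (‖s - x‖ / 2)

/-- The support function of `L` with respect to `x`: `p_x(L, w) = sup_{s ∈ L} ⟨s − x, w⟩`. -/
def suppf (x : E2) (L : Set E2) (w : E2) : ℝ :=
  sSup ((fun s => ⟪s - x, w⟫) '' L)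

/-- for every `D ⊆ ℝ²`, the set of centers `x` with
`closedBall x ‖x‖ ⊆ D` is convex. -/
theorem convex_antiorthotomic_region (D : Set E2) :
    Convex ℝ {x : E2 | closedBall x ‖x‖ ⊆ D} := by
  have h : {x : E2 | closedBall x ‖x‖ ⊆ D} =
      ⋂ y ∈ Dᶜ, {x : E2 | ⟪x, y⟫ < ‖y‖ ^ 2 / 2} := by
    ext x
    simp only [mem_setOf_eq, mem_iInter, mem_compl_iff]
    constructor
    · intro hx y hy
      by_contra hlt
      push_neg at hlt
      apply hy
      apply hx
      rw [mem_closedBall, dist_eq_norm]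
      have hsq : ‖y - x‖ ^ 2 ≤ ‖x‖ ^ 2 := by
        have := norm_sub_sq_real y x
        have hc := real_inner_comm x y
        nlinarith
      have := norm_nonneg (y - x)
      have := norm_nonneg x
      nlinarith
    · intro hx y hy
      by_contra hyD
      have h1 := hx y hyD
      rw [mem_closedBall, dist_eq_norm] at hy
      have hsq : ‖y - x‖ ^ 2 ≤ ‖x‖ ^ 2 := by
        have := norm_nonneg (y - x)
        nlinarith
      have := norm_sub_sq_real y x
      have hc := real_inner_comm x y
      nlinarith
  rw [h]
  exact convex_iInter fun y => convex_iInter fun _ =>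
    convex_halfSpace_lt
      ⟨fun a b => inner_add_left a b y, fun c a => real_inner_smul_left a y c⟩ _
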